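/- Suppose P is two-sided and directionally atomless, that b⁺ ≥ (a⁺)² and b⁻ ≥ (a⁻)², and that (ρ'+a⁺, ρ'+a⁻) ≠ (0,0). Let M ∈ ℝ^{m×n}, 𝒜 = {u ∈ ℝⁿ : Mu ≥ 0 componentwise} and −𝒜 = {−u : u ∈ 𝒜}. Fix Y < 0 and define J(u) = E[q] − (E[m])² + γ⁻Y·E[m] for u ∈ ℝⁿ (where Y' = sY + P'u). Then for u ∈ ℝⁿ one has u ∈ 𝒜 if and only if u/Y ∈ −𝒜; J attains its minimum over 𝒜; a vector u* ∈ 𝒜 minimizes J over 𝒜 if and only if K* = u*/Y minimizes F⁻ over −𝒜; and min_{u∈𝒜} J(u) = Y²·min_{K∈−𝒜} F⁻(K). -/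

import Mathlib

open MeasureTheory Filter
set_option linter.unusedSectionVars false

noncomputable def Gfun (r a b t : ℝ) : ℝ := r * t + a * max t 0 + b * min t 0
noncomputable def Hfun (r cp cm t : ℝ) : ℝ := r ^ 2 * t ^ 2 + cp * (max t 0) ^ 2 + cm * (min t 0) ^ 2

lemma abs_max_zero_le (t : ℝ) : |max t 0| ≤ |t| := by
  rcases le_total 0 t with h | h
  · simp [max_eq_left h]
  · simp [max_eq_right h, abs_nonneg]

lemma abs_min_zero_le (t : ℝ) : |min t 0| ≤ |t| := by
  rcases le_total 0 t with h | h
  · simp [min_eq_right h, abs_nonneg]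
  · simp [min_eq_left h]

lemma abs_Gfun_le (r a b t : ℝ) : |Gfun r a b t| ≤ (|r| + |a| + |b|) * |t| := by
  unfold Gfun
  calc |r * t + a * max t 0 + b * min t 0|
      ≤ |r * t + a * max t 0| + |b * min t 0| := abs_add_le _ _
    _ ≤ |r * t| + |a * max t 0| + |b * min t 0| := by
        have := abs_add_le (r * t) (a * max t 0); linarith
    _ ≤ |r| * |t| + |a| * |t| + |b| * |t| := by
        rw [abs_mul, abs_mul, abs_mul]
        have h1 := abs_max_zero_le t
        have h2 := abs_min_zero_le t
        have := abs_nonneg a; have := abs_nonneg b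
        nlinarith [abs_nonneg t]
    _ = (|r| + |a| + |b|) * |t| := by ring

lemma abs_Hfun_le (r cp cm t : ℝ) : |Hfun r cp cm t| ≤ (r ^ 2 + |cp| + |cm|) * t ^ 2 := by
  unfold Hfun
  have hM : (max t 0) ^ 2 ≤ t ^ 2 := by
    rw [← sq_abs t, ← sq_abs (max t 0)]
    exact pow_le_pow_left₀ (abs_nonneg _) (abs_max_zero_le t) 2
  have hm : (min t 0) ^ 2 ≤ t ^ 2 := by
    rw [← sq_abs t, ← sq_abs (min t 0)]
    exact pow_le_pow_left₀ (abs_nonneg _) (abs_min_zero_le t) 2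
  calc |r ^ 2 * t ^ 2 + cp * (max t 0) ^ 2 + cm * (min t 0) ^ 2|
      ≤ |r ^ 2 * t ^ 2 + cp * (max t 0) ^ 2| + |cm * (min t 0) ^ 2| := abs_add_le _ _
    _ ≤ |r ^ 2 * t ^ 2| + |cp * (max t 0) ^ 2| + |cm * (min t 0) ^ 2| := by
        have := abs_add_le (r ^ 2 * t ^ 2) (cp * (max t 0) ^ 2); linarith
    _ ≤ r ^ 2 * t ^ 2 + |cp| * t ^ 2 + |cm| * t ^ 2 := by
        rw [abs_mul, abs_mul, abs_mul]
        have h1 : |(max t 0) ^ 2| = (max t 0)^2 := abs_of_nonneg (sq_nonneg _)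
        have h2 : |(min t 0) ^ 2| = (min t 0)^2 := abs_of_nonneg (sq_nonneg _)
        have h3 : |r ^ 2| = r ^ 2 := abs_of_nonneg (sq_nonneg _)
        have h4 : |t ^ 2| = t ^ 2 := abs_of_nonneg (sq_nonneg _)
        rw [h1, h2, h3, h4]
        have := abs_nonneg cp; have := abs_nonneg cm
        nlinarith
    _ = (r ^ 2 + |cp| + |cm|) * t ^ 2 := by ring

lemma continuous_Gfun (r a b : ℝ) : Continuous (Gfun r a b) :=
  ((continuous_const.mul continuous_id).add
    (continuous_const.mul (continuous_id.max continuous_const))).add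
    (continuous_const.mul (continuous_id.min continuous_const))

lemma continuous_Hfun (r cp cm : ℝ) : Continuous (Hfun r cp cm) :=
  ((continuous_const.mul (continuous_pow 2)).add
    (continuous_const.mul ((continuous_id.max continuous_const).pow 2))).add
    (continuous_const.mul ((continuous_id.min continuous_const).pow 2))

lemma Gfun_homog (r a b : ℝ) {c : ℝ} (hc : 0 ≤ c) (t : ℝ) :
    Gfun r a b (c * t) = c * Gfun r a b t := by
  unfold Gfun
  rw [show max (c * t) 0 = c * max t 0 by rw [mul_max_of_nonneg _ _ hc, mul_zero],
      show min (c * t) 0 = c * min t 0 by rw [mul_min_of_nonneg _ _ hc, mul_zero]]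
  ring

lemma sq_Gfun_le_Hfun {r a b bp bm : ℝ} (hbp : a ^ 2 ≤ bp) (hbm : b ^ 2 ≤ bm) (t : ℝ) :
    (Gfun r a b t) ^ 2 ≤ Hfun r (2 * r * a + bp) (2 * r * b + bm) t := by
  unfold Gfun Hfun
  have hmm : max t 0 * min t 0 = 0 := by
    rcases le_total 0 t with h | h
    · simp [min_eq_right h]
    · simp [max_eq_right h]
  have hsum : max t 0 + min t 0 = t := by rw [max_add_min, add_zero]
  set M := max t 0 with hMd
  set m' := min t 0 with hmd
  rw [← hsum]
  have key : r ^ 2 * (M + m') ^ 2 + (2 * r * a + bp) * M ^ 2 + (2 * r * b + bm) * m' ^ 2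
      - (r * (M + m') + a * M + b * m') ^ 2
      = (bp - a ^ 2) * M ^ 2 + (bm - b ^ 2) * m' ^ 2
        + (2 * r ^ 2 - 2 * (r + a) * (r + b)) * (M * m') := by ring
  rw [hmm, mul_zero] at key
  have h1 := mul_nonneg (sub_nonneg.2 hbp) (sq_nonneg M)
  have h2 := mul_nonneg (sub_nonneg.2 hbm) (sq_nonneg m')
  linarith


/-- The function `F⁻` from the paper, written with expectations as Bochner integrals. -/
noncomputable def Fminus {Ω : Type*} [MeasurableSpace Ω] (ℙ : Measure Ω) {n : ℕ}
    (P : Ω → EuclideanSpace ℝ (Fin n)) (s ρ' γm ap am bp bm : ℝ)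
    (K : EuclideanSpace ℝ (Fin n)) : ℝ :=
  let pk : Ω → ℝ := fun ω => inner ℝ (P ω) K
  let A : ℝ :=
    (∫ ω, ap * (s + pk ω) * (if s + pk ω ≤ 0 then (1:ℝ) else 0) ∂ℙ) +
    (∫ ω, am * (s + pk ω) * (if 0 < s + pk ω then (1:ℝ) else 0) ∂ℙ)
  ρ' ^ 2 * ((∫ ω, (pk ω) ^ 2 ∂ℙ) - (∫ ω, pk ω ∂ℙ) ^ 2) +
  (∫ ω, (2 * ρ' * ap + bp) * (s + pk ω) ^ 2 * (if s + pk ω ≤ 0 then (1:ℝ) else 0) ∂ℙ) +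
  (∫ ω, (2 * ρ' * am + bm) * (s + pk ω) ^ 2 * (if 0 < s + pk ω then (1:ℝ) else 0) ∂ℙ) -
  A ^ 2 - 2 * ρ' * A * (s + ∫ ω, pk ω ∂ℙ) + γm * A +
  ρ' * γm * (s + ∫ ω, pk ω ∂ℙ)

/-- The random variable `m = ρ'Y' + a⁺Y'·1{Y' ≥ 0} + a⁻Y'·1{Y' < 0}`,
where `Y' = sY + P'u`. -/
noncomputable def mRV {Ω : Type*} {n : ℕ} (P : Ω → EuclideanSpace ℝ (Fin n))
    (s ρ' ap am : ℝ) (Y : ℝ) (u : EuclideanSpace ℝ (Fin n)) (ω : Ω) : ℝ :=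
  let Y' : ℝ := s * Y + inner ℝ (P ω) u
  ρ' * Y' + ap * Y' * (if 0 ≤ Y' then (1:ℝ) else 0) +
    am * Y' * (if Y' < 0 then (1:ℝ) else 0)

/-- The random variable `q = ρ'²Y'² + (2ρ'a⁺+b⁺)Y'²·1{Y' ≥ 0} + (2ρ'a⁻+b⁻)Y'²·1{Y' < 0}`,
where `Y' = sY + P'u`. -/
noncomputable def qRV {Ω : Type*} {n : ℕ} (P : Ω → EuclideanSpace ℝ (Fin n))
    (s ρ' ap am bp bm : ℝ) (Y : ℝ) (u : EuclideanSpace ℝ (Fin n)) (ω : Ω) : ℝ :=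
  let Y' : ℝ := s * Y + inner ℝ (P ω) u
  ρ' ^ 2 * Y' ^ 2 + (2 * ρ' * ap + bp) * Y' ^ 2 * (if 0 ≤ Y' then (1:ℝ) else 0) +
    (2 * ρ' * am + bm) * Y' ^ 2 * (if Y' < 0 then (1:ℝ) else 0)

-- mRV/qRV rewriting
lemma mRV_eq {Ω : Type*} {n : ℕ} (P : Ω → EuclideanSpace ℝ (Fin n))
    (s ρ' ap am Y : ℝ) (u : EuclideanSpace ℝ (Fin n)) (ω : Ω) :
    mRV P s ρ' ap am Y u ω = Gfun ρ' ap am (s * Y + inner ℝ (P ω) u) := by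
  simp only [mRV, Gfun]
  set t : ℝ := s * Y + inner ℝ (P ω) u with ht
  rcases le_or_gt 0 t with h | h
  · rw [if_pos h, if_neg (not_lt.2 h), max_eq_left h, min_eq_right h]; ring
  · rw [if_neg (not_le.2 h), if_pos h, max_eq_right h.le, min_eq_left h.le]; ring

lemma qRV_eq {Ω : Type*} {n : ℕ} (P : Ω → EuclideanSpace ℝ (Fin n))
    (s ρ' ap am bp bm Y : ℝ) (u : EuclideanSpace ℝ (Fin n)) (ω : Ω) :
    qRV P s ρ' ap am bp bm Y u ω
      = Hfun ρ' (2 * ρ' * ap + bp) (2 * ρ' * am + bm) (s * Y + inner ℝ (P ω) u) := by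
  simp only [qRV, Hfun]
  set t : ℝ := s * Y + inner ℝ (P ω) u with ht
  rcases le_or_gt 0 t with h | h
  · rw [if_pos h, if_neg (not_lt.2 h), max_eq_left h, min_eq_right h]; ring
  · rw [if_neg (not_le.2 h), if_pos h, max_eq_right h.le, min_eq_left h.le]; ring

section Integrability
variable {Ω : Type*} [MeasurableSpace Ω] {ℙ : Measure Ω} [IsProbabilityMeasure ℙ] {n : ℕ}
  {P : Ω → EuclideanSpace ℝ (Fin n)}

lemma meas_affine (hmeas : Measurable P) (c : ℝ) (u : EuclideanSpace ℝ (Fin n)) :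
    Measurable (fun ω => c + (inner ℝ (P ω) u : ℝ)) :=
  measurable_const.add (hmeas.inner measurable_const)

lemma int_norm (hmeas : Measurable P) (hL2 : Integrable (fun ω => ‖P ω‖ ^ 2) ℙ) :
    Integrable (fun ω => ‖P ω‖) ℙ := by
  refine Integrable.mono' (g := fun ω => ‖P ω‖ ^ 2 + 1) (hL2.add (integrable_const 1))
    hmeas.norm.aestronglyMeasurable (Filter.Eventually.of_forall fun ω => ?_)
  rw [norm_norm]
  nlinarith [norm_nonneg (P ω), sq_nonneg (‖P ω‖ - 1)]

lemma int_inner (hmeas : Measurable P) (hL2 : Integrable (fun ω => ‖P ω‖ ^ 2) ℙ)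
    (u : EuclideanSpace ℝ (Fin n)) :
    Integrable (fun ω => (inner ℝ (P ω) u : ℝ)) ℙ := by
  refine Integrable.mono' (g := fun ω => ‖u‖ * ‖P ω‖) ((int_norm hmeas hL2).const_mul _)
    (hmeas.inner measurable_const).aestronglyMeasurable
    (Filter.Eventually.of_forall fun ω => ?_)
  rw [Real.norm_eq_abs]
  calc |(inner ℝ (P ω) u : ℝ)| ≤ ‖P ω‖ * ‖u‖ := abs_real_inner_le_norm _ _
    _ = ‖u‖ * ‖P ω‖ := mul_comm _ _

lemma int_inner_sq (hmeas : Measurable P) (hL2 : Integrable (fun ω => ‖P ω‖ ^ 2) ℙ)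
    (u : EuclideanSpace ℝ (Fin n)) :
    Integrable (fun ω => (inner ℝ (P ω) u : ℝ) ^ 2) ℙ := by
  refine Integrable.mono' (g := fun ω => ‖u‖ ^ 2 * ‖P ω‖ ^ 2) (hL2.const_mul _)
    ((hmeas.inner measurable_const).pow_const 2).aestronglyMeasurable
    (Filter.Eventually.of_forall fun ω => ?_)
  rw [Real.norm_eq_abs, abs_of_nonneg (sq_nonneg _)]
  have h := abs_real_inner_le_norm (P ω) u
  nlinarith [mul_self_le_mul_self (abs_nonneg (inner ℝ (P ω) u : ℝ)) h,
    sq_abs (inner ℝ (P ω) u : ℝ)]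

lemma int_affine (hmeas : Measurable P) (hL2 : Integrable (fun ω => ‖P ω‖ ^ 2) ℙ)
    (c : ℝ) (u : EuclideanSpace ℝ (Fin n)) :
    Integrable (fun ω => c + (inner ℝ (P ω) u : ℝ)) ℙ :=
  (integrable_const c).add (int_inner hmeas hL2 u)

lemma int_affine_sq (hmeas : Measurable P) (hL2 : Integrable (fun ω => ‖P ω‖ ^ 2) ℙ)
    (c : ℝ) (u : EuclideanSpace ℝ (Fin n)) :
    Integrable (fun ω => (c + (inner ℝ (P ω) u : ℝ)) ^ 2) ℙ := by
  have : (fun ω => (c + (inner ℝ (P ω) u : ℝ)) ^ 2)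
      = fun ω => (c ^ 2 + 2 * c * (inner ℝ (P ω) u : ℝ)) + (inner ℝ (P ω) u : ℝ) ^ 2 := by
    funext ω; ring
  rw [this]
  exact ((integrable_const _).add ((int_inner hmeas hL2 u).const_mul _)).add
    (int_inner_sq hmeas hL2 u)

lemma int_G (hmeas : Measurable P) (hL2 : Integrable (fun ω => ‖P ω‖ ^ 2) ℙ)
    (r a b c : ℝ) (u : EuclideanSpace ℝ (Fin n)) :
    Integrable (fun ω => Gfun r a b (c + (inner ℝ (P ω) u : ℝ))) ℙ := by
  refine Integrable.mono' (g := fun ω => (|r| + |a| + |b|) * |c + (inner ℝ (P ω) u : ℝ)|)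
    ((int_affine hmeas hL2 c u).abs.const_mul _)
    ((continuous_Gfun r a b).measurable.comp (meas_affine hmeas c u)).aestronglyMeasurable
    (Filter.Eventually.of_forall fun ω => ?_)
  rw [Real.norm_eq_abs]
  exact abs_Gfun_le r a b _

lemma int_G_sq (hmeas : Measurable P) (hL2 : Integrable (fun ω => ‖P ω‖ ^ 2) ℙ)
    (r a b c : ℝ) (u : EuclideanSpace ℝ (Fin n)) :
    Integrable (fun ω => (Gfun r a b (c + (inner ℝ (P ω) u : ℝ))) ^ 2) ℙ := by
  refine Integrable.mono'
    (g := fun ω => (|r| + |a| + |b|) ^ 2 * (c + (inner ℝ (P ω) u : ℝ)) ^ 2)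
    ((int_affine_sq hmeas hL2 c u).const_mul _)
    (((continuous_Gfun r a b).measurable.comp (meas_affine hmeas c u)).pow_const
      2).aestronglyMeasurable
    (Filter.Eventually.of_forall fun ω => ?_)
  rw [Real.norm_eq_abs, abs_of_nonneg (sq_nonneg _)]
  have h := abs_Gfun_le r a b (c + (inner ℝ (P ω) u : ℝ))
  nlinarith [mul_self_le_mul_self (abs_nonneg (Gfun r a b (c + (inner ℝ (P ω) u : ℝ)))) h,
    sq_abs (Gfun r a b (c + (inner ℝ (P ω) u : ℝ))), sq_abs (c + (inner ℝ (P ω) u : ℝ))]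

lemma int_H (hmeas : Measurable P) (hL2 : Integrable (fun ω => ‖P ω‖ ^ 2) ℙ)
    (r cp cm c : ℝ) (u : EuclideanSpace ℝ (Fin n)) :
    Integrable (fun ω => Hfun r cp cm (c + (inner ℝ (P ω) u : ℝ))) ℙ := by
  refine Integrable.mono'
    (g := fun ω => (r ^ 2 + |cp| + |cm|) * (c + (inner ℝ (P ω) u : ℝ)) ^ 2)
    ((int_affine_sq hmeas hL2 c u).const_mul _)
    ((continuous_Hfun r cp cm).measurable.comp (meas_affine hmeas c u)).aestronglyMeasurable
    (Filter.Eventually.of_forall fun ω => ?_)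
  rw [Real.norm_eq_abs]
  exact abs_Hfun_le r cp cm _

lemma meas_indic_le (hmeas : Measurable P) (c : ℝ) (u : EuclideanSpace ℝ (Fin n)) :
    Measurable (fun ω => if c + (inner ℝ (P ω) u : ℝ) ≤ 0 then (1:ℝ) else 0) :=
  Measurable.ite (measurableSet_le (meas_affine hmeas c u) measurable_const)
    measurable_const measurable_const

lemma meas_indic_gt (hmeas : Measurable P) (c : ℝ) (u : EuclideanSpace ℝ (Fin n)) :
    Measurable (fun ω => if 0 < c + (inner ℝ (P ω) u : ℝ) then (1:ℝ) else 0) :=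
  Measurable.ite (measurableSet_lt measurable_const (meas_affine hmeas c u))
    measurable_const measurable_const

lemma abs_indic_le (t : ℝ) : |(if t ≤ 0 then (1:ℝ) else 0)| ≤ 1 := by
  split <;> simp

lemma abs_indic_gt (t : ℝ) : |(if 0 < t then (1:ℝ) else 0)| ≤ 1 := by
  split <;> simp

lemma int_lin_indic (hmeas : Measurable P) (hL2 : Integrable (fun ω => ‖P ω‖ ^ 2) ℙ)
    (a c : ℝ) (u : EuclideanSpace ℝ (Fin n))
    (χ : ℝ → ℝ) (hχmeas : Measurable (fun ω => χ (c + (inner ℝ (P ω) u : ℝ))))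
    (hχbd : ∀ t, |χ t| ≤ 1) :
    Integrable (fun ω => a * (c + (inner ℝ (P ω) u : ℝ)) * χ (c + (inner ℝ (P ω) u : ℝ))) ℙ := by
  refine Integrable.mono' (g := fun ω => |a| * |c + (inner ℝ (P ω) u : ℝ)|)
    ((int_affine hmeas hL2 c u).abs.const_mul _)
    (((measurable_const.mul (meas_affine hmeas c u)).mul hχmeas)).aestronglyMeasurable
    (Filter.Eventually.of_forall fun ω => ?_)
  rw [Real.norm_eq_abs, abs_mul, abs_mul]
  have h1 := hχbd (c + (inner ℝ (P ω) u : ℝ))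
  have h2 : (0:ℝ) ≤ |a| * |c + (inner ℝ (P ω) u : ℝ)| := by positivity
  exact mul_le_of_le_one_right h2 h1

lemma int_sq_indic (hmeas : Measurable P) (hL2 : Integrable (fun ω => ‖P ω‖ ^ 2) ℙ)
    (a c : ℝ) (u : EuclideanSpace ℝ (Fin n))
    (χ : ℝ → ℝ) (hχmeas : Measurable (fun ω => χ (c + (inner ℝ (P ω) u : ℝ))))
    (hχbd : ∀ t, |χ t| ≤ 1) :
    Integrable (fun ω => a * (c + (inner ℝ (P ω) u : ℝ)) ^ 2 * χ (c + (inner ℝ (P ω) u : ℝ))) ℙ := by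
  refine Integrable.mono' (g := fun ω => |a| * (c + (inner ℝ (P ω) u : ℝ)) ^ 2)
    ((int_affine_sq hmeas hL2 c u).const_mul _)
    (((measurable_const.mul ((meas_affine hmeas c u).pow_const 2)).mul
      hχmeas)).aestronglyMeasurable
    (Filter.Eventually.of_forall fun ω => ?_)
  rw [Real.norm_eq_abs, abs_mul, abs_mul, abs_of_nonneg (sq_nonneg (c + (inner ℝ (P ω) u : ℝ)))]
  have h1 := hχbd (c + (inner ℝ (P ω) u : ℝ))
  have h2 : (0:ℝ) ≤ |a| * (c + (inner ℝ (P ω) u : ℝ)) ^ 2 := by positivity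
  exact mul_le_of_le_one_right h2 h1

end Integrability

lemma mul_nonneg_of_np_np {a b : ℝ} (ha : a ≤ 0) (hb : b ≤ 0) : 0 ≤ a * b := by nlinarith

section KeyIdentity
variable {Ω : Type*} [MeasurableSpace Ω] {ℙ : Measure Ω} [IsProbabilityMeasure ℙ] {n : ℕ}
  {P : Ω → EuclideanSpace ℝ (Fin n)}

lemma int_sq_expand (hmeas : Measurable P) (hL2 : Integrable (fun ω => ‖P ω‖ ^ 2) ℙ)
    (s : ℝ) (K : EuclideanSpace ℝ (Fin n)) :
    (∫ ω, (s + (inner ℝ (P ω) K : ℝ)) ^ 2 ∂ℙ)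
      = s ^ 2 + 2 * s * (∫ ω, (inner ℝ (P ω) K : ℝ) ∂ℙ) + ∫ ω, (inner ℝ (P ω) K : ℝ) ^ 2 ∂ℙ := by
  have hpt : ∀ ω, (s + (inner ℝ (P ω) K : ℝ)) ^ 2
      = (s ^ 2 + 2 * s * (inner ℝ (P ω) K : ℝ)) + (inner ℝ (P ω) K : ℝ) ^ 2 := by
    intro ω; ring
  simp only [hpt]
  rw [integral_add (f := fun ω => s ^ 2 + 2 * s * (inner ℝ (P ω) K : ℝ))
      (g := fun ω => (inner ℝ (P ω) K : ℝ) ^ 2)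
      ((integrable_const _).add ((int_inner hmeas hL2 K).const_mul _))
      (int_inner_sq hmeas hL2 K),
    integral_add (f := fun _ => s ^ 2) (g := fun ω => 2 * s * (inner ℝ (P ω) K : ℝ))
      (integrable_const _) ((int_inner hmeas hL2 K).const_mul _),
    integral_const, integral_const_mul]
  simp

lemma integral_m_eq (hmeas : Measurable P) (hL2 : Integrable (fun ω => ‖P ω‖ ^ 2) ℙ)
    (s ρ' ap am Y : ℝ) (hY : Y < 0) (K : EuclideanSpace ℝ (Fin n)) :
    (∫ ω, mRV P s ρ' ap am Y (Y • K) ω ∂ℙ)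
      = Y * ((ρ' * s + ρ' * (∫ ω, (inner ℝ (P ω) K : ℝ) ∂ℙ))
        + ((∫ ω, ap * (s + (inner ℝ (P ω) K : ℝ)) *
              (if s + (inner ℝ (P ω) K : ℝ) ≤ 0 then (1:ℝ) else 0) ∂ℙ)
          + (∫ ω, am * (s + (inner ℝ (P ω) K : ℝ)) *
              (if 0 < s + (inner ℝ (P ω) K : ℝ) then (1:ℝ) else 0) ∂ℙ))) := by
  have hpt : ∀ ω, mRV P s ρ' ap am Y (Y • K) ω
      = Y * ((ρ' * s + ρ' * (inner ℝ (P ω) K : ℝ))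
          + (ap * (s + (inner ℝ (P ω) K : ℝ)) *
              (if s + (inner ℝ (P ω) K : ℝ) ≤ 0 then (1:ℝ) else 0)
            + am * (s + (inner ℝ (P ω) K : ℝ)) *
              (if 0 < s + (inner ℝ (P ω) K : ℝ) then (1:ℝ) else 0))) := by
    intro ω
    have hY' : s * Y + (inner ℝ (P ω) (Y • K) : ℝ) = Y * (s + (inner ℝ (P ω) K : ℝ)) := by
      rw [real_inner_smul_right]; ring
    simp only [mRV, hY']
    rcases le_or_gt (s + (inner ℝ (P ω) K : ℝ)) 0 with h | h
    · rw [if_pos (mul_nonneg_of_np_np hY.le h),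
        if_neg (not_lt.2 (mul_nonneg_of_np_np hY.le h)),
        if_pos h, if_neg (not_lt.2 h)]
      ring
    · rw [if_neg (not_le.2 (mul_neg_of_neg_of_pos hY h)),
        if_pos (mul_neg_of_neg_of_pos hY h), if_neg (not_le.2 h), if_pos h]
      ring
  simp only [hpt]
  rw [integral_const_mul,
    integral_add (f := fun ω => ρ' * s + ρ' * (inner ℝ (P ω) K : ℝ))
      (g := fun ω => ap * (s + (inner ℝ (P ω) K : ℝ)) *
              (if s + (inner ℝ (P ω) K : ℝ) ≤ 0 then (1:ℝ) else 0)
            + am * (s + (inner ℝ (P ω) K : ℝ)) *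
              (if 0 < s + (inner ℝ (P ω) K : ℝ) then (1:ℝ) else 0))
      ((integrable_const _).add ((int_inner hmeas hL2 K).const_mul _))
      ((int_lin_indic hmeas hL2 ap s K _ (meas_indic_le hmeas s K) abs_indic_le).add
        (int_lin_indic hmeas hL2 am s K _ (meas_indic_gt hmeas s K) abs_indic_gt)),
    integral_add (f := fun _ => ρ' * s) (g := fun ω => ρ' * (inner ℝ (P ω) K : ℝ))
      (integrable_const _) ((int_inner hmeas hL2 K).const_mul _),
    integral_add (f := fun ω => ap * (s + (inner ℝ (P ω) K : ℝ)) *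
              (if s + (inner ℝ (P ω) K : ℝ) ≤ 0 then (1:ℝ) else 0))
      (g := fun ω => am * (s + (inner ℝ (P ω) K : ℝ)) *
              (if 0 < s + (inner ℝ (P ω) K : ℝ) then (1:ℝ) else 0))
      (int_lin_indic hmeas hL2 ap s K _ (meas_indic_le hmeas s K) abs_indic_le)
      (int_lin_indic hmeas hL2 am s K _ (meas_indic_gt hmeas s K) abs_indic_gt),
    integral_const, integral_const_mul]
  simp

lemma integral_q_eq (hmeas : Measurable P) (hL2 : Integrable (fun ω => ‖P ω‖ ^ 2) ℙ)
    (s ρ' ap am bp bm Y : ℝ) (hY : Y < 0) (K : EuclideanSpace ℝ (Fin n)) :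
    (∫ ω, qRV P s ρ' ap am bp bm Y (Y • K) ω ∂ℙ)
      = Y ^ 2 * ((ρ' ^ 2 * (∫ ω, (s + (inner ℝ (P ω) K : ℝ)) ^ 2 ∂ℙ))
        + ((∫ ω, (2 * ρ' * ap + bp) * (s + (inner ℝ (P ω) K : ℝ)) ^ 2 *
              (if s + (inner ℝ (P ω) K : ℝ) ≤ 0 then (1:ℝ) else 0) ∂ℙ)
          + (∫ ω, (2 * ρ' * am + bm) * (s + (inner ℝ (P ω) K : ℝ)) ^ 2 *
              (if 0 < s + (inner ℝ (P ω) K : ℝ) then (1:ℝ) else 0) ∂ℙ))) := by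
  have hpt : ∀ ω, qRV P s ρ' ap am bp bm Y (Y • K) ω
      = Y ^ 2 * ((ρ' ^ 2 * (s + (inner ℝ (P ω) K : ℝ)) ^ 2)
          + ((2 * ρ' * ap + bp) * (s + (inner ℝ (P ω) K : ℝ)) ^ 2 *
              (if s + (inner ℝ (P ω) K : ℝ) ≤ 0 then (1:ℝ) else 0)
            + (2 * ρ' * am + bm) * (s + (inner ℝ (P ω) K : ℝ)) ^ 2 *
              (if 0 < s + (inner ℝ (P ω) K : ℝ) then (1:ℝ) else 0))) := by
    intro ω
    have hY' : s * Y + (inner ℝ (P ω) (Y • K) : ℝ) = Y * (s + (inner ℝ (P ω) K : ℝ)) := by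
      rw [real_inner_smul_right]; ring
    simp only [qRV, hY']
    rcases le_or_gt (s + (inner ℝ (P ω) K : ℝ)) 0 with h | h
    · rw [if_pos (mul_nonneg_of_np_np hY.le h),
        if_neg (not_lt.2 (mul_nonneg_of_np_np hY.le h)),
        if_pos h, if_neg (not_lt.2 h)]
      ring
    · rw [if_neg (not_le.2 (mul_neg_of_neg_of_pos hY h)),
        if_pos (mul_neg_of_neg_of_pos hY h), if_neg (not_le.2 h), if_pos h]
      ring
  simp only [hpt]
  rw [integral_const_mul,
    integral_add (f := fun ω => ρ' ^ 2 * (s + (inner ℝ (P ω) K : ℝ)) ^ 2)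
      (g := fun ω => (2 * ρ' * ap + bp) * (s + (inner ℝ (P ω) K : ℝ)) ^ 2 *
              (if s + (inner ℝ (P ω) K : ℝ) ≤ 0 then (1:ℝ) else 0)
            + (2 * ρ' * am + bm) * (s + (inner ℝ (P ω) K : ℝ)) ^ 2 *
              (if 0 < s + (inner ℝ (P ω) K : ℝ) then (1:ℝ) else 0))
      ((int_affine_sq hmeas hL2 s K).const_mul _)
      ((int_sq_indic hmeas hL2 _ s K _ (meas_indic_le hmeas s K) abs_indic_le).add
        (int_sq_indic hmeas hL2 _ s K _ (meas_indic_gt hmeas s K) abs_indic_gt)),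
    integral_add (f := fun ω => (2 * ρ' * ap + bp) * (s + (inner ℝ (P ω) K : ℝ)) ^ 2 *
              (if s + (inner ℝ (P ω) K : ℝ) ≤ 0 then (1:ℝ) else 0))
      (g := fun ω => (2 * ρ' * am + bm) * (s + (inner ℝ (P ω) K : ℝ)) ^ 2 *
              (if 0 < s + (inner ℝ (P ω) K : ℝ) then (1:ℝ) else 0))
      (int_sq_indic hmeas hL2 _ s K _ (meas_indic_le hmeas s K) abs_indic_le)
      (int_sq_indic hmeas hL2 _ s K _ (meas_indic_gt hmeas s K) abs_indic_gt),
    integral_const_mul]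

lemma J_eq_Fminus (hmeas : Measurable P) (hL2 : Integrable (fun ω => ‖P ω‖ ^ 2) ℙ)
    (s ρ' γm ap am bp bm Y : ℝ) (hY : Y < 0) (K : EuclideanSpace ℝ (Fin n)) :
    (∫ ω, qRV P s ρ' ap am bp bm Y (Y • K) ω ∂ℙ)
      - (∫ ω, mRV P s ρ' ap am Y (Y • K) ω ∂ℙ) ^ 2
      + γm * Y * (∫ ω, mRV P s ρ' ap am Y (Y • K) ω ∂ℙ)
      = Y ^ 2 * Fminus ℙ P s ρ' γm ap am bp bm K := by
  rw [integral_m_eq hmeas hL2 s ρ' ap am Y hY K,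
    integral_q_eq hmeas hL2 s ρ' ap am bp bm Y hY K,
    int_sq_expand hmeas hL2 s K]
  simp only [Fminus]
  ring

end KeyIdentity

section VarPos
variable {Ω : Type*} [MeasurableSpace Ω] {ℙ : Measure Ω} [IsProbabilityMeasure ℙ] {n : ℕ}
  {P : Ω → EuclideanSpace ℝ (Fin n)}

lemma Gfun_pos {r a b z : ℝ} (hz : 0 < z) : Gfun r a b z = (r + a) * z := by
  unfold Gfun; rw [max_eq_left hz.le, min_eq_right hz.le]; ring

lemma Gfun_neg {r a b z : ℝ} (hz : z < 0) : Gfun r a b z = (r + b) * z := by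
  unfold Gfun; rw [max_eq_right hz.le, min_eq_left hz.le]; ring

lemma var_pos (hmeas : Measurable P) (hL2 : Integrable (fun ω => ‖P ω‖ ^ 2) ℙ)
    (r a b : ℝ) (hab : r + a ≠ 0 ∨ r + b ≠ 0) (v : EuclideanSpace ℝ (Fin n)) (hv : v ≠ 0)
    (htwo : 0 < ℙ {ω | 0 < (inner ℝ (P ω) v : ℝ)} ∧ 0 < ℙ {ω | (inner ℝ (P ω) v : ℝ) < 0})
    (hatom : ∀ c : ℝ, ℙ {ω | (inner ℝ (P ω) v : ℝ) = c} = 0) :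
    0 < (∫ ω, (Gfun r a b (inner ℝ (P ω) v : ℝ)) ^ 2 ∂ℙ)
        - (∫ ω, Gfun r a b (inner ℝ (P ω) v : ℝ) ∂ℙ) ^ 2 := by
  set g : Ω → ℝ := fun ω => Gfun r a b (inner ℝ (P ω) v : ℝ) with hgdef
  have hg : Integrable g ℙ :=
    (int_G hmeas hL2 r a b 0 v).congr (Filter.Eventually.of_forall fun ω => by simp [hgdef])
  have hg2 : Integrable (fun ω => g ω ^ 2) ℙ :=
    (int_G_sq hmeas hL2 r a b 0 v).congr (Filter.Eventually.of_forall fun ω => by simp [hgdef])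
  set μ := ∫ ω, g ω ∂ℙ with hμdef
  have hint : Integrable (fun ω => (g ω - μ) ^ 2) ℙ := by
    refine (hg2.add ((hg.const_mul (-2 * μ)).add (integrable_const (μ ^ 2)))).congr
      (Filter.Eventually.of_forall fun ω => ?_)
    show g ω ^ 2 + (-2 * μ * g ω + μ ^ 2) = (g ω - μ) ^ 2
    ring
  have hvar : ∫ ω, (g ω - μ) ^ 2 ∂ℙ = (∫ ω, g ω ^ 2 ∂ℙ) - μ ^ 2 := by
    have hpt : ∀ ω : Ω, (g ω - μ) ^ 2 = g ω ^ 2 + (-2 * μ * g ω + μ ^ 2) := fun ω => by ring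
    simp only [hpt]
    rw [integral_add (f := fun ω => g ω ^ 2) (g := fun ω => -2 * μ * g ω + μ ^ 2) hg2
        ((hg.const_mul _).add (integrable_const _)),
      integral_add (f := fun ω => -2 * μ * g ω) (g := fun _ => μ ^ 2)
        (hg.const_mul _) (integrable_const _),
      integral_const_mul, integral_const]
    simp [← hμdef]
    ring
  have hnn : 0 ≤ (∫ ω, g ω ^ 2 ∂ℙ) - μ ^ 2 := hvar ▸ integral_nonneg fun ω => sq_nonneg _
  rcases hnn.lt_or_eq with h | h
  · exact h
  exfalso
  have hz : ∫ ω, (g ω - μ) ^ 2 ∂ℙ = 0 := by rw [hvar, ← h]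
  have hae : (fun ω => (g ω - μ) ^ 2) =ᶠ[ae ℙ] 0 :=
    (integral_eq_zero_iff_of_nonneg (fun ω => sq_nonneg _) hint).1 hz
  have hgconst : ∀ᵐ ω ∂ℙ, g ω = μ := by
    refine hae.mono fun ω hω => ?_
    have h2 : (g ω - μ) ^ 2 = 0 := hω
    have := pow_eq_zero_iff (n := 2) (by norm_num) |>.1 h2
    linarith [sub_eq_zero.1 this]
  have hN : ℙ {ω | ¬ g ω = μ} = 0 := by
    have := hgconst
    rw [MeasureTheory.ae_iff] at this
    exact this
  rcases hab with hα | hβ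
  · have hsub : {ω | 0 < (inner ℝ (P ω) v : ℝ)}
        ⊆ {ω | ¬ g ω = μ} ∪ {ω | (inner ℝ (P ω) v : ℝ) = μ / (r + a)} := by
      intro ω hω
      by_cases hgω : g ω = μ
      · right
        have hval : (r + a) * (inner ℝ (P ω) v : ℝ) = μ := by
          rw [← Gfun_pos (r := r) (a := a) (b := b) hω]; exact hgω
        exact Set.mem_setOf.2 ((eq_div_iff hα).2 (by linarith))
      · exact Or.inl hgω
    have hle := (measure_mono (μ := ℙ) hsub).trans (measure_union_le _ _)
    rw [hN, hatom (μ / (r + a)), add_zero] at hle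
    exact absurd (htwo.1.trans_le hle) (by simp)
  · have hsub : {ω | (inner ℝ (P ω) v : ℝ) < 0}
        ⊆ {ω | ¬ g ω = μ} ∪ {ω | (inner ℝ (P ω) v : ℝ) = μ / (r + b)} := by
      intro ω hω
      by_cases hgω : g ω = μ
      · right
        have hval : (r + b) * (inner ℝ (P ω) v : ℝ) = μ := by
          rw [← Gfun_neg (r := r) (a := a) (b := b) hω]; exact hgω
        exact Set.mem_setOf.2 ((eq_div_iff hβ).2 (by linarith))
      · exact Or.inl hgω
    have hle := (measure_mono (μ := ℙ) hsub).trans (measure_union_le _ _)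
    rw [hN, hatom (μ / (r + b)), add_zero] at hle
    exact absurd (htwo.2.trans_le hle) (by simp)

end VarPos

section Continuity
variable {Ω : Type*} [MeasurableSpace Ω] {ℙ : Measure Ω} [IsProbabilityMeasure ℙ] {n : ℕ}
  {P : Ω → EuclideanSpace ℝ (Fin n)}

lemma norm_le_of_ball {u u₀ : EuclideanSpace ℝ (Fin n)} (hu : u ∈ Metric.ball u₀ 1) :
    ‖u‖ ≤ ‖u₀‖ + 1 := by
  have := mem_ball_iff_norm.1 hu
  calc ‖u‖ = ‖u - u₀ + u₀‖ := by rw [sub_add_cancel]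
    _ ≤ ‖u - u₀‖ + ‖u₀‖ := norm_add_le _ _
    _ ≤ ‖u₀‖ + 1 := by linarith

lemma affine_abs_le {u u₀ : EuclideanSpace ℝ (Fin n)} (hu : u ∈ Metric.ball u₀ 1)
    (c : ℝ) (ω : Ω) : |c + (inner ℝ (P ω) u : ℝ)| ≤ |c| + (‖u₀‖ + 1) * ‖P ω‖ := by
  have h1 := abs_add_le c (inner ℝ (P ω) u : ℝ)
  have h2 := abs_real_inner_le_norm (P ω) u
  have h3 := norm_le_of_ball hu
  nlinarith [norm_nonneg (P ω), abs_nonneg (inner ℝ (P ω) u : ℝ)]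

lemma int_bound1 (hmeas : Measurable P) (hL2 : Integrable (fun ω => ‖P ω‖ ^ 2) ℙ)
    (L c A : ℝ) : Integrable (fun ω => L * (|c| + A * ‖P ω‖)) ℙ :=
  (((integrable_const _).add ((int_norm hmeas hL2).const_mul _)).const_mul _)

lemma int_bound2 (hmeas : Measurable P) (hL2 : Integrable (fun ω => ‖P ω‖ ^ 2) ℙ)
    (L c A : ℝ) : Integrable (fun ω => L * (|c| + A * ‖P ω‖) ^ 2) ℙ := by
  refine Integrable.const_mul ?_ _
  refine (((integrable_const (|c| ^ 2)).add
    (((int_norm hmeas hL2).const_mul (2 * |c| * A)).add (hL2.const_mul (A ^ 2)))).congr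
    (Filter.Eventually.of_forall fun ω => ?_))
  show |c| ^ 2 + (2 * |c| * A * ‖P ω‖ + A ^ 2 * ‖P ω‖ ^ 2) = (|c| + A * ‖P ω‖) ^ 2
  ring

lemma cont_int_G (hmeas : Measurable P) (hL2 : Integrable (fun ω => ‖P ω‖ ^ 2) ℙ)
    (r a b c : ℝ) :
    Continuous fun u : EuclideanSpace ℝ (Fin n) =>
      ∫ ω, Gfun r a b (c + (inner ℝ (P ω) u : ℝ)) ∂ℙ := by
  rw [continuous_iff_continuousAt]; intro u₀
  refine continuousAt_of_dominated
    (bound := fun ω => (|r| + |a| + |b|) * (|c| + (‖u₀‖ + 1) * ‖P ω‖)) ?_ ?_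
    (int_bound1 hmeas hL2 _ _ _) ?_
  · exact Filter.Eventually.of_forall fun u =>
      ((continuous_Gfun r a b).measurable.comp (meas_affine hmeas c u)).aestronglyMeasurable
  · filter_upwards [Metric.ball_mem_nhds u₀ one_pos] with u hu
    refine Filter.Eventually.of_forall fun ω => ?_
    rw [Real.norm_eq_abs]
    calc |Gfun r a b (c + (inner ℝ (P ω) u : ℝ))|
        ≤ (|r| + |a| + |b|) * |c + (inner ℝ (P ω) u : ℝ)| := abs_Gfun_le _ _ _ _
      _ ≤ (|r| + |a| + |b|) * (|c| + (‖u₀‖ + 1) * ‖P ω‖) := by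
          have := affine_abs_le (P := P) hu c ω
          have h0 : (0:ℝ) ≤ |r| + |a| + |b| := by positivity
          nlinarith
  · refine Filter.Eventually.of_forall fun ω => ?_
    exact ((continuous_Gfun r a b).comp
      (continuous_const.add (Continuous.inner continuous_const continuous_id))).continuousAt

lemma cont_int_H (hmeas : Measurable P) (hL2 : Integrable (fun ω => ‖P ω‖ ^ 2) ℙ)
    (r cp cm c : ℝ) :
    Continuous fun u : EuclideanSpace ℝ (Fin n) =>
      ∫ ω, Hfun r cp cm (c + (inner ℝ (P ω) u : ℝ)) ∂ℙ := by
  rw [continuous_iff_continuousAt]; intro u₀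
  refine continuousAt_of_dominated
    (bound := fun ω => (r ^ 2 + |cp| + |cm|) * (|c| + (‖u₀‖ + 1) * ‖P ω‖) ^ 2) ?_ ?_
    (int_bound2 hmeas hL2 _ _ _) ?_
  · exact Filter.Eventually.of_forall fun u =>
      ((continuous_Hfun r cp cm).measurable.comp (meas_affine hmeas c u)).aestronglyMeasurable
  · filter_upwards [Metric.ball_mem_nhds u₀ one_pos] with u hu
    refine Filter.Eventually.of_forall fun ω => ?_
    rw [Real.norm_eq_abs]
    calc |Hfun r cp cm (c + (inner ℝ (P ω) u : ℝ))|
        ≤ (r ^ 2 + |cp| + |cm|) * (c + (inner ℝ (P ω) u : ℝ)) ^ 2 := abs_Hfun_le _ _ _ _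
      _ ≤ (r ^ 2 + |cp| + |cm|) * (|c| + (‖u₀‖ + 1) * ‖P ω‖) ^ 2 := by
          have h1 := affine_abs_le (P := P) hu c ω
          have h0 : (0:ℝ) ≤ r ^ 2 + |cp| + |cm| := by positivity
          have h2 : (c + (inner ℝ (P ω) u : ℝ)) ^ 2 ≤ (|c| + (‖u₀‖ + 1) * ‖P ω‖) ^ 2 := by
            rw [← sq_abs (c + (inner ℝ (P ω) u : ℝ))]
            exact pow_le_pow_left₀ (abs_nonneg _) h1 2
          nlinarith
  · refine Filter.Eventually.of_forall fun ω => ?_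
    exact ((continuous_Hfun r cp cm).comp
      (continuous_const.add (Continuous.inner continuous_const continuous_id))).continuousAt

end Continuity

section Existence
variable {Ω : Type*} [MeasurableSpace Ω] {ℙ : Measure Ω} [IsProbabilityMeasure ℙ] {n : ℕ}
  {P : Ω → EuclideanSpace ℝ (Fin n)}

lemma int_mRV (hmeas : Measurable P) (hL2 : Integrable (fun ω => ‖P ω‖ ^ 2) ℙ)
    (s ρ' ap am Y : ℝ) (u : EuclideanSpace ℝ (Fin n)) :
    Integrable (fun ω => mRV P s ρ' ap am Y u ω) ℙ :=
  (int_G hmeas hL2 ρ' ap am (s * Y) u).congr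
    (Filter.Eventually.of_forall fun ω => (mRV_eq P s ρ' ap am Y u ω).symm)

lemma int_mRV_sq (hmeas : Measurable P) (hL2 : Integrable (fun ω => ‖P ω‖ ^ 2) ℙ)
    (s ρ' ap am Y : ℝ) (u : EuclideanSpace ℝ (Fin n)) :
    Integrable (fun ω => (mRV P s ρ' ap am Y u ω) ^ 2) ℙ :=
  (int_G_sq hmeas hL2 ρ' ap am (s * Y) u).congr
    (Filter.Eventually.of_forall fun ω => by simp only [mRV_eq])

lemma int_qRV (hmeas : Measurable P) (hL2 : Integrable (fun ω => ‖P ω‖ ^ 2) ℙ)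
    (s ρ' ap am bp bm Y : ℝ) (u : EuclideanSpace ℝ (Fin n)) :
    Integrable (fun ω => qRV P s ρ' ap am bp bm Y u ω) ℙ :=
  (int_H hmeas hL2 ρ' (2 * ρ' * ap + bp) (2 * ρ' * am + bm) (s * Y) u).congr
    (Filter.Eventually.of_forall fun ω => (qRV_eq P s ρ' ap am bp bm Y u ω).symm)

lemma exists_min_J (hmeas : Measurable P) (hL2 : Integrable (fun ω => ‖P ω‖ ^ 2) ℙ)
    (s ρ' γm ap am bp bm Y : ℝ)
    (htwosided : ∀ L : EuclideanSpace ℝ (Fin n), L ≠ 0 →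
      0 < ℙ {ω | 0 < (inner ℝ (P ω) L : ℝ)} ∧ 0 < ℙ {ω | (inner ℝ (P ω) L : ℝ) < 0})
    (hatomless : ∀ L : EuclideanSpace ℝ (Fin n), L ≠ 0 →
      ∀ c : ℝ, ℙ {ω | (inner ℝ (P ω) L : ℝ) = c} = 0)
    (hbp : ap ^ 2 ≤ bp) (hbm : am ^ 2 ≤ bm)
    (hab : ρ' + ap ≠ 0 ∨ ρ' + am ≠ 0)
    (A : Set (EuclideanSpace ℝ (Fin n))) (hAc : IsClosed A) (h0A : (0 : EuclideanSpace ℝ (Fin n)) ∈ A) :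
    ∃ ustar ∈ A, ∀ u ∈ A,
      ((∫ ω, qRV P s ρ' ap am bp bm Y ustar ω ∂ℙ) -
        (∫ ω, mRV P s ρ' ap am Y ustar ω ∂ℙ) ^ 2 +
        γm * Y * (∫ ω, mRV P s ρ' ap am Y ustar ω ∂ℙ)) ≤
      ((∫ ω, qRV P s ρ' ap am bp bm Y u ω ∂ℙ) -
        (∫ ω, mRV P s ρ' ap am Y u ω ∂ℙ) ^ 2 +
        γm * Y * (∫ ω, mRV P s ρ' ap am Y u ω ∂ℙ)) := by
  set J : EuclideanSpace ℝ (Fin n) → ℝ := fun u =>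
    (∫ ω, qRV P s ρ' ap am bp bm Y u ω ∂ℙ) -
      (∫ ω, mRV P s ρ' ap am Y u ω ∂ℙ) ^ 2 +
      γm * Y * (∫ ω, mRV P s ρ' ap am Y u ω ∂ℙ) with hJdef
  -- continuity
  have hJrw : J = fun u =>
      (∫ ω, Hfun ρ' (2 * ρ' * ap + bp) (2 * ρ' * am + bm) (s * Y + (inner ℝ (P ω) u : ℝ)) ∂ℙ) -
        (∫ ω, Gfun ρ' ap am (s * Y + (inner ℝ (P ω) u : ℝ)) ∂ℙ) ^ 2 +
        γm * Y * (∫ ω, Gfun ρ' ap am (s * Y + (inner ℝ (P ω) u : ℝ)) ∂ℙ) := by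
    funext u
    have h1 : (∫ ω, mRV P s ρ' ap am Y u ω ∂ℙ)
        = ∫ ω, Gfun ρ' ap am (s * Y + (inner ℝ (P ω) u : ℝ)) ∂ℙ :=
      integral_congr_ae (Filter.Eventually.of_forall fun ω => mRV_eq P s ρ' ap am Y u ω)
    have h2 : (∫ ω, qRV P s ρ' ap am bp bm Y u ω ∂ℙ)
        = ∫ ω, Hfun ρ' (2 * ρ' * ap + bp) (2 * ρ' * am + bm) (s * Y + (inner ℝ (P ω) u : ℝ)) ∂ℙ :=
      integral_congr_ae (Filter.Eventually.of_forall fun ω => qRV_eq P s ρ' ap am bp bm Y u ω)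
    simp only [hJdef]
    rw [h1, h2]
  have hJcont : Continuous J := by
    rw [hJrw]
    exact ((cont_int_H hmeas hL2 _ _ _ _).sub ((cont_int_G hmeas hL2 _ _ _ _).pow 2)).add
      (continuous_const.mul (cont_int_G hmeas hL2 _ _ _ _))
  -- coercivity
  have hcoer : ∃ R : ℝ, 0 < R ∧ ∀ u : EuclideanSpace ℝ (Fin n), R ≤ ‖u‖ → J 0 < J u := by
    by_contra hcon
    push_neg at hcon
    have hsel : ∀ k : ℕ, ∃ u : EuclideanSpace ℝ (Fin n), ((k : ℝ) + 1) ≤ ‖u‖ ∧ J u ≤ J 0 := by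
      intro k
      obtain ⟨u, hu1, hu2⟩ := hcon ((k : ℝ) + 1) (by positivity)
      exact ⟨u, hu1, hu2⟩
    choose w hw1 hw2 using hsel
    set t : ℕ → ℝ := fun k => ‖w k‖ with htdef
    have htpos : ∀ k, 0 < t k := fun k => lt_of_lt_of_le (by positivity) (hw1 k)
    have ht1 : ∀ k, 1 ≤ t k := fun k => le_trans (by norm_num : (1:ℝ) ≤ (k:ℝ) + 1) (hw1 k)
    set v : ℕ → EuclideanSpace ℝ (Fin n) := fun k => (t k)⁻¹ • w k with hvdef
    have hv : ∀ k, v k ∈ Metric.sphere (0 : EuclideanSpace ℝ (Fin n)) 1 := by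
      intro k
      rw [mem_sphere_zero_iff_norm]
      show ‖(t k)⁻¹ • w k‖ = 1
      rw [norm_smul, norm_inv, Real.norm_eq_abs, abs_of_pos (htpos k)]
      exact inv_mul_cancel₀ (htpos k).ne'
    obtain ⟨v0, hv0mem, φ, hφ, hφtend⟩ := (isCompact_sphere (0 : EuclideanSpace ℝ (Fin n)) 1).tendsto_subseq hv
    have hv0 : ‖v0‖ = 1 := mem_sphere_zero_iff_norm.1 hv0mem
    have hv0ne : v0 ≠ 0 := by intro h; rw [h, norm_zero] at hv0; norm_num at hv0
    have hvnorm : ∀ k, ‖v k‖ = 1 := fun k => mem_sphere_zero_iff_norm.1 (hv k)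
    have hwtv : ∀ k, w k = t k • v k := by
      intro k
      rw [hvdef, smul_smul, mul_inv_cancel₀ (htpos k).ne', one_smul]
    set c : ℝ := s * Y with hcdef
    set L : ℝ := |ρ'| + |ap| + |am| with hLdef
    have hLnn : 0 ≤ L := by rw [hLdef]; positivity
    set f : ℕ → Ω → ℝ := fun k ω => Gfun ρ' ap am (c / t (φ k) + (inner ℝ (P ω) (v (φ k)) : ℝ)) with hfdef
    set fL : Ω → ℝ := fun ω => Gfun ρ' ap am ((inner ℝ (P ω) v0 : ℝ)) with hfLdef
    -- t (φ k) → ∞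
    have htφ : ∀ k : ℕ, (k : ℝ) + 1 ≤ t (φ k) := by
      intro k
      have h1 : ((k : ℝ) + 1) ≤ ((φ k : ℝ) + 1) := by
        have := hφ.le_apply (x := k)
        exact_mod_cast Nat.add_le_add_right this 1
      exact h1.trans (hw1 (φ k))
    have htφtend : Filter.Tendsto (fun k => t (φ k)) Filter.atTop Filter.atTop := by
      refine Filter.tendsto_atTop_mono (fun k => ?_) (tendsto_natCast_atTop_atTop (R := ℝ))
      linarith [htφ k]
    have hctend : Filter.Tendsto (fun k => c / t (φ k)) Filter.atTop (nhds 0) :=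
      Filter.Tendsto.div_atTop tendsto_const_nhds htφtend
    -- pointwise limit
    have hptlim : ∀ ω, Filter.Tendsto (fun k => f k ω) Filter.atTop (nhds (fL ω)) := by
      intro ω
      have hinner : Filter.Tendsto (fun k => (inner ℝ (P ω) (v (φ k)) : ℝ)) Filter.atTop
          (nhds (inner ℝ (P ω) v0 : ℝ)) :=
        ((Continuous.inner continuous_const continuous_id).tendsto v0).comp hφtend
      have h1 := hctend.add hinner
      rw [zero_add] at h1
      exact ((continuous_Gfun ρ' ap am).tendsto _).comp h1
    -- bounds
    have hbd : ∀ k, ∀ ω : Ω, |f k ω| ≤ L * (|c| + ‖P ω‖) := by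
      intro k ω
      have h1 : |f k ω| ≤ L * |c / t (φ k) + (inner ℝ (P ω) (v (φ k)) : ℝ)| := abs_Gfun_le _ _ _ _
      have h2 : |c / t (φ k) + (inner ℝ (P ω) (v (φ k)) : ℝ)| ≤ |c| + ‖P ω‖ := by
        have ha := abs_add_le (c / t (φ k)) ((inner ℝ (P ω) (v (φ k)) : ℝ))
        have hb : |c / t (φ k)| ≤ |c| := by
          rw [abs_div, abs_of_pos (htpos (φ k))]
          exact div_le_self (abs_nonneg c) (ht1 (φ k))
        have hc2 : |(inner ℝ (P ω) (v (φ k)) : ℝ)| ≤ ‖P ω‖ := by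
          have := abs_real_inner_le_norm (P ω) (v (φ k))
          rwa [hvnorm (φ k), mul_one] at this
        linarith
      calc |f k ω| ≤ L * |c / t (φ k) + (inner ℝ (P ω) (v (φ k)) : ℝ)| := h1
        _ ≤ L * (|c| + ‖P ω‖) := mul_le_mul_of_nonneg_left h2 hLnn
    have hmeasf : ∀ k, AEStronglyMeasurable (f k) ℙ := fun k =>
      ((continuous_Gfun ρ' ap am).measurable.comp
        (meas_affine hmeas (c / t (φ k)) (v (φ k)))).aestronglyMeasurable
    have hbint : Integrable (fun ω => L * (|c| + ‖P ω‖)) ℙ :=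
      ((integrable_const _).add (int_norm hmeas hL2)).const_mul _
    have hIm : Filter.Tendsto (fun k => ∫ ω, f k ω ∂ℙ) Filter.atTop (nhds (∫ ω, fL ω ∂ℙ)) := by
      refine tendsto_integral_of_dominated_convergence _ hmeasf hbint
        (fun k => Filter.Eventually.of_forall fun ω => ?_) (Filter.Eventually.of_forall hptlim)
      rw [Real.norm_eq_abs]; exact hbd k ω
    have hb2int : Integrable (fun ω => L ^ 2 * (|c| + ‖P ω‖) ^ 2) ℙ :=
      (int_bound2 hmeas hL2 (L ^ 2) c 1).congr
        (Filter.Eventually.of_forall fun ω => by norm_num)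
    have hIm2 : Filter.Tendsto (fun k => ∫ ω, (f k ω) ^ 2 ∂ℙ) Filter.atTop
        (nhds (∫ ω, (fL ω) ^ 2 ∂ℙ)) := by
      refine tendsto_integral_of_dominated_convergence (fun ω => L ^ 2 * (|c| + ‖P ω‖) ^ 2)
        (fun k => ((hmeasf k).aemeasurable.pow_const 2).aestronglyMeasurable) hb2int
        (fun k => Filter.Eventually.of_forall fun ω => ?_)
        (Filter.Eventually.of_forall fun ω => ((hptlim ω).pow 2))
      rw [Real.norm_eq_abs, abs_of_nonneg (sq_nonneg _)]
      have h1 := hbd k ω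
      nlinarith [mul_self_le_mul_self (abs_nonneg (f k ω)) h1, sq_abs (f k ω)]
    -- positive limit variance
    have hδpos : 0 < (∫ ω, (fL ω) ^ 2 ∂ℙ) - (∫ ω, fL ω ∂ℙ) ^ 2 :=
      var_pos hmeas hL2 ρ' ap am hab v0 hv0ne (htwosided v0 hv0ne) (hatomless v0 hv0ne)
    set δ : ℝ := (∫ ω, (fL ω) ^ 2 ∂ℙ) - (∫ ω, fL ω ∂ℙ) ^ 2 with hδdef
    set I : ℝ := ∫ ω, fL ω ∂ℙ with hIdef
    -- pointwise relation mRV = t * f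
    have hmpt : ∀ k ω, mRV P s ρ' ap am Y (w (φ k)) ω = t (φ k) * f k ω := by
      intro k ω
      rw [mRV_eq]
      have harg : s * Y + (inner ℝ (P ω) (w (φ k)) : ℝ)
          = t (φ k) * (c / t (φ k) + (inner ℝ (P ω) (v (φ k)) : ℝ)) := by
        rw [hwtv (φ k), real_inner_smul_right, hcdef]
        have hcan : t (φ k) * (s * Y / t (φ k)) = s * Y := by
          field_simp
          rw [mul_assoc]; exact mul_div_cancel_left₀ _ (htpos (φ k)).ne'
        rw [mul_add, hcan]
      rw [harg, Gfun_homog _ _ _ (htpos (φ k)).le]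
    have hIntm : ∀ k, (∫ ω, mRV P s ρ' ap am Y (w (φ k)) ω ∂ℙ) = t (φ k) * ∫ ω, f k ω ∂ℙ := by
      intro k
      simp only [hmpt]
      exact integral_const_mul _ _
    have hIntm2 : ∀ k, (∫ ω, (mRV P s ρ' ap am Y (w (φ k)) ω) ^ 2 ∂ℙ)
        = (t (φ k)) ^ 2 * ∫ ω, (f k ω) ^ 2 ∂ℙ := by
      intro k
      have : ∀ ω : Ω, (mRV P s ρ' ap am Y (w (φ k)) ω) ^ 2 = (t (φ k)) ^ 2 * (f k ω) ^ 2 := by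
        intro ω; rw [hmpt k ω]; ring
      simp only [this]
      exact integral_const_mul _ _
    -- J lower bound
    have hJlow : ∀ k, (t (φ k)) ^ 2 * ((∫ ω, (f k ω) ^ 2 ∂ℙ) - (∫ ω, f k ω ∂ℙ) ^ 2)
        - |γm * Y| * (t (φ k) * |∫ ω, f k ω ∂ℙ|) ≤ J (w (φ k)) := by
      intro k
      have hqm : ∀ ω : Ω, (mRV P s ρ' ap am Y (w (φ k)) ω) ^ 2
          ≤ qRV P s ρ' ap am bp bm Y (w (φ k)) ω := by
        intro ω
        rw [mRV_eq, qRV_eq]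
        exact sq_Gfun_le_Hfun hbp hbm _
      have hmono := integral_mono (int_mRV_sq hmeas hL2 s ρ' ap am Y (w (φ k)))
        (int_qRV hmeas hL2 s ρ' ap am bp bm Y (w (φ k))) hqm
      have habs : -( |γm * Y| * (t (φ k) * |∫ ω, f k ω ∂ℙ|)) ≤
          γm * Y * (∫ ω, mRV P s ρ' ap am Y (w (φ k)) ω ∂ℙ) := by
        rw [hIntm k]
        have h1 : |γm * Y * (t (φ k) * ∫ ω, f k ω ∂ℙ)|
            = |γm * Y| * (t (φ k) * |∫ ω, f k ω ∂ℙ|) := by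
          rw [abs_mul (γm * Y) (t (φ k) * ∫ ω, f k ω ∂ℙ),
            abs_mul (t (φ k)) (∫ ω, f k ω ∂ℙ), abs_of_pos (htpos (φ k))]
        calc -( |γm * Y| * (t (φ k) * |∫ ω, f k ω ∂ℙ|))
            = -|γm * Y * (t (φ k) * ∫ ω, f k ω ∂ℙ)| := by rw [h1]
          _ ≤ γm * Y * (t (φ k) * ∫ ω, f k ω ∂ℙ) := neg_abs_le _
          _ = γm * Y * (t (φ k) * ∫ ω, f k ω ∂ℙ) := rfl
      rw [hIntm2 k] at hmono
      rw [hIntm k] at habs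
      simp only [hJdef]
      rw [hIntm k, show ((t (φ k)) * ∫ ω, f k ω ∂ℙ) ^ 2
        = (t (φ k)) ^ 2 * (∫ ω, f k ω ∂ℙ) ^ 2 from by ring]
      have hexp : (t (φ k)) ^ 2 * ((∫ ω, (f k ω) ^ 2 ∂ℙ) - (∫ ω, f k ω ∂ℙ) ^ 2)
          = (t (φ k)) ^ 2 * (∫ ω, (f k ω) ^ 2 ∂ℙ) - (t (φ k)) ^ 2 * (∫ ω, f k ω ∂ℙ) ^ 2 := by
        ring
      linarith
    -- eventual bounds
    have hVtend : Filter.Tendsto (fun k => (∫ ω, (f k ω) ^ 2 ∂ℙ) - (∫ ω, f k ω ∂ℙ) ^ 2)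
        Filter.atTop (nhds δ) := hIm2.sub (hIm.pow 2)
    have hev1 : ∀ᶠ k in Filter.atTop, δ / 2 ≤ (∫ ω, (f k ω) ^ 2 ∂ℙ) - (∫ ω, f k ω ∂ℙ) ^ 2 :=
      hVtend.eventually (eventually_ge_nhds (by linarith))
    have hev2 : ∀ᶠ k in Filter.atTop, |∫ ω, f k ω ∂ℙ| ≤ |I| + 1 :=
      (hIm.abs.eventually (eventually_le_nhds (lt_add_one _)))
    obtain ⟨N, hN⟩ := (hev1.and hev2).exists_forall_of_atTop
    -- choose k large
    set C' : ℝ := |γm * Y| * (|I| + 1) with hC'def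
    have hC'nn : 0 ≤ C' := by rw [hC'def]; positivity
    set T₀ : ℝ := (2 / δ) * (C' + |J 0| + 1) with hT₀def
    obtain ⟨K₀, hK₀⟩ := exists_nat_ge T₀
    set k := max N K₀ with hkdef
    obtain ⟨hVk, hIk⟩ := hN k (le_max_left _ _)
    have htk : T₀ ≤ t (φ k) := by
      have h1 : (K₀ : ℝ) ≤ (k : ℝ) := by exact_mod_cast le_max_right N K₀
      linarith [htφ k, hK₀]
    have htk1 : 1 ≤ t (φ k) := ht1 (φ k)
    -- derive contradiction
    have hlow := hJlow k
    have hstep1 : (t (φ k)) ^ 2 * (δ / 2) - |γm * Y| * (t (φ k) * (|I| + 1)) ≤ J (w (φ k)) := by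
      have ht2 : (0:ℝ) ≤ (t (φ k)) ^ 2 := sq_nonneg _
      have hmul1 : (t (φ k)) ^ 2 * (δ / 2)
          ≤ (t (φ k)) ^ 2 * ((∫ ω, (f k ω) ^ 2 ∂ℙ) - (∫ ω, f k ω ∂ℙ) ^ 2) :=
        mul_le_mul_of_nonneg_left hVk ht2
      have hmul2 : |γm * Y| * (t (φ k) * |∫ ω, f k ω ∂ℙ|)
          ≤ |γm * Y| * (t (φ k) * (|I| + 1)) := by
        have := mul_le_mul_of_nonneg_left hIk (htpos (φ k)).le
        exact mul_le_mul_of_nonneg_left this (abs_nonneg _)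
      exact (sub_le_sub hmul1 hmul2).trans (hJlow k)
    have hfin : J 0 < J (w (φ k)) := by
      refine lt_of_lt_of_le ?_ hstep1
      have hh1 : C' + |J 0| + 1 ≤ t (φ k) * (δ / 2) := by
        have h1 : T₀ * (δ / 2) ≤ t (φ k) * (δ / 2) :=
          mul_le_mul_of_nonneg_right htk (by linarith)
        have h2 : T₀ * (δ / 2) = C' + |J 0| + 1 := by
          rw [hT₀def]; field_simp
        linarith
      have hh2 : t (φ k) * (C' + |J 0| + 1) ≤ t (φ k) * (t (φ k) * (δ / 2)) :=
        mul_le_mul_of_nonneg_left hh1 (htpos (φ k)).le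
      have hh3 : |J 0| + 1 ≤ t (φ k) * (|J 0| + 1) :=
        le_mul_of_one_le_left (by positivity) htk1
      calc J 0 < |J 0| + 1 := by linarith [le_abs_self (J 0)]
        _ ≤ t (φ k) * (|J 0| + 1) := hh3
        _ = t (φ k) * (C' + |J 0| + 1) - C' * t (φ k) := by ring
        _ ≤ t (φ k) * (t (φ k) * (δ / 2)) - C' * t (φ k) := by linarith [hh2]
        _ = (t (φ k)) ^ 2 * (δ / 2) - |γm * Y| * (t (φ k) * (|I| + 1)) := by
            rw [hC'def]; ring
    exact absurd (hw2 (φ k)) (not_le.2 hfin)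
  -- conclude with compactness
  obtain ⟨R, hRpos, hR⟩ := hcoer
  set S : Set (EuclideanSpace ℝ (Fin n)) := A ∩ Metric.closedBall 0 R with hSdef
  have hScompact : IsCompact S :=
    (isCompact_closedBall (0 : EuclideanSpace ℝ (Fin n)) R).of_isClosed_subset
      (hAc.inter Metric.isClosed_closedBall) Set.inter_subset_right
  have h0S : (0 : EuclideanSpace ℝ (Fin n)) ∈ S :=
    ⟨h0A, Metric.mem_closedBall_self hRpos.le⟩
  obtain ⟨x, hxS, hxmin⟩ := hScompact.exists_isMinOn ⟨0, h0S⟩ hJcont.continuousOn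
  refine ⟨x, hxS.1, fun u hu => ?_⟩
  rcases le_or_gt ‖u‖ R with h | h
  · exact hxmin ⟨hu, by rwa [Metric.mem_closedBall, dist_zero_right]⟩
  · have h1 : J 0 < J u := hR u h.le
    have h2 : J x ≤ J 0 := hxmin h0S
    show J x ≤ J u
    linarith

end Existence

/-- Cone-constrained version for `Y < 0`: with `𝒜 = {u : Mu ≥ 0 componentwise}`,
`−𝒜 = {−u : u ∈ 𝒜}` and `J(u) = E[q] − (E[m])² + γ⁻Y·E[m]`: `u ∈ 𝒜 ↔ u/Y ∈ −𝒜`;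
`J` attains its minimum over `𝒜`; `u* ∈ 𝒜` minimizes `J` over `𝒜` iff
`K* = u*/Y` minimizes `F⁻` over `−𝒜`; and the minimum of `J` over `𝒜` equals
`Y²` times the minimum of `F⁻` over `−𝒜`. -/
theorem J_min_iff_Fminus_min_cone {Ω : Type*} [MeasurableSpace Ω] (ℙ : Measure Ω)
    [IsProbabilityMeasure ℙ] {n : ℕ} (hn : 1 ≤ n)
    (P : Ω → EuclideanSpace ℝ (Fin n)) (hmeas : Measurable P)
    (hL2 : Integrable (fun ω => ‖P ω‖ ^ 2) ℙ)
    (s ρ' γm ap am bp bm : ℝ) (hs : 0 < s) (hρ : 0 < ρ')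
    (htwosided : ∀ L : EuclideanSpace ℝ (Fin n), L ≠ 0 →
      0 < ℙ {ω | 0 < (inner ℝ (P ω) L : ℝ)} ∧ 0 < ℙ {ω | (inner ℝ (P ω) L : ℝ) < 0})
    (hatomless : ∀ L : EuclideanSpace ℝ (Fin n), L ≠ 0 →
      ∀ c : ℝ, ℙ {ω | (inner ℝ (P ω) L : ℝ) = c} = 0)
    (hbp : ap ^ 2 ≤ bp) (hbm : am ^ 2 ≤ bm)
    (hne : (ρ' + ap, ρ' + am) ≠ ((0 : ℝ), (0 : ℝ)))
    (m : ℕ) (M : Matrix (Fin m) (Fin n) ℝ)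
    (Y : ℝ) (hY : Y < 0) :
    let A : Set (EuclideanSpace ℝ (Fin n)) :=
      {u | ∀ i : Fin m, 0 ≤ ∑ j : Fin n, M i j * u j}
    let negA : Set (EuclideanSpace ℝ (Fin n)) := {u | -u ∈ A}
    let J : EuclideanSpace ℝ (Fin n) → ℝ := fun u =>
      (∫ ω, qRV P s ρ' ap am bp bm Y u ω ∂ℙ) -
        (∫ ω, mRV P s ρ' ap am Y u ω ∂ℙ) ^ 2 +
        γm * Y * (∫ ω, mRV P s ρ' ap am Y u ω ∂ℙ)
    let F : EuclideanSpace ℝ (Fin n) → ℝ := Fminus ℙ P s ρ' γm ap am bp bm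
    (∀ u : EuclideanSpace ℝ (Fin n), u ∈ A ↔ (1 / Y) • u ∈ negA) ∧
      (∃ ustar ∈ A, ∀ u ∈ A, J ustar ≤ J u) ∧
      (∀ ustar ∈ A,
        ((∀ u ∈ A, J ustar ≤ J u) ↔
          ((1 / Y) • ustar ∈ negA ∧ ∀ K ∈ negA, F ((1 / Y) • ustar) ≤ F K))) ∧
      (∀ ustar ∈ A, ∀ Kstar ∈ negA,
        (∀ u ∈ A, J ustar ≤ J u) → (∀ K ∈ negA, F Kstar ≤ F K) →
          J ustar = Y ^ 2 * F Kstar) := by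
  intro A negA J F
  have hYne : Y ≠ 0 := ne_of_lt hY
  have hipos : 0 < -(1 / Y) := neg_pos.2 (one_div_neg.2 hY)
  have hY2pos : 0 < Y ^ 2 := by positivity
  -- Part 1 : cone bijection
  have part1 : ∀ u : EuclideanSpace ℝ (Fin n), u ∈ A ↔ (1 / Y) • u ∈ negA := by
    intro u
    have hsum : ∀ i : Fin m, (∑ j : Fin n, M i j * (-((1 / Y) • u)) j)
        = (-(1 / Y)) * ∑ j : Fin n, M i j * u j := by
      intro i
      rw [Finset.mul_sum]
      refine Finset.sum_congr rfl fun j _ => ?_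
      have : (-((1 / Y) • u)) j = -((1 / Y) * u j) := by simp
      rw [this]; ring
    constructor
    · intro h
      show ∀ i : Fin m, 0 ≤ ∑ j : Fin n, M i j * (-((1 / Y) • u)) j
      intro i
      rw [hsum i]
      exact mul_nonneg hipos.le (h i)
    · intro h
      intro i
      have h2 := h i
      rw [hsum i] at h2
      exact nonneg_of_mul_nonneg_right h2 hipos
  -- A closed, 0 ∈ A
  have hAclosed : IsClosed A := by
    have hrw : A = ⋂ i : Fin m, {u : EuclideanSpace ℝ (Fin n) | 0 ≤ ∑ j : Fin n, M i j * u j} := by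
      ext u
      simp only [Set.mem_iInter, Set.mem_setOf_eq]
      exact Iff.rfl
    rw [hrw]
    refine isClosed_iInter fun i => isClosed_le continuous_const ?_
    exact continuous_finset_sum _ fun j _ =>
      continuous_const.mul (EuclideanSpace.proj j).continuous
  have h0A : (0 : EuclideanSpace ℝ (Fin n)) ∈ A := by
    intro i
    have : ∀ j : Fin n, M i j * (0 : EuclideanSpace ℝ (Fin n)) j = 0 := fun j => by simp
    rw [Finset.sum_congr rfl fun j _ => this j]
    simp
  -- key identity
  have hid : ∀ u : EuclideanSpace ℝ (Fin n), J u = Y ^ 2 * F ((1 / Y) • u) := by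
    intro u
    have hu : Y • ((1 / Y) • u) = u := by
      rw [smul_smul, one_div, mul_inv_cancel₀ hYne, one_smul]
    have := J_eq_Fminus (ℙ := ℙ) hmeas hL2 s ρ' γm ap am bp bm Y hY ((1 / Y) • u)
    rw [hu] at this
    exact this
  have hKinv : ∀ K : EuclideanSpace ℝ (Fin n), (1 / Y) • (Y • K) = K := by
    intro K
    rw [smul_smul, one_div, inv_mul_cancel₀ hYne, one_smul]
  have hab : ρ' + ap ≠ 0 ∨ ρ' + am ≠ 0 := by
    by_contra hcon
    push_neg at hcon
    exact hne (by rw [hcon.1, hcon.2])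
  -- Part 2 : existence
  have part2 : ∃ ustar ∈ A, ∀ u ∈ A, J ustar ≤ J u :=
    exists_min_J hmeas hL2 s ρ' γm ap am bp bm Y htwosided hatomless hbp hbm hab A hAclosed h0A
  -- Part 3 : equivalence
  have part3 : ∀ ustar ∈ A,
      ((∀ u ∈ A, J ustar ≤ J u) ↔
        ((1 / Y) • ustar ∈ negA ∧ ∀ K ∈ negA, F ((1 / Y) • ustar) ≤ F K)) := by
    intro ustar hustar
    constructor
    · intro hmin
      refine ⟨(part1 ustar).1 hustar, fun K hK => ?_⟩
      have hKA : Y • K ∈ A := (part1 (Y • K)).2 (by rw [hKinv K]; exact hK)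
      have h1 : J ustar ≤ J (Y • K) := hmin _ hKA
      rw [hid ustar, hid (Y • K), hKinv K] at h1
      exact le_of_mul_le_mul_left (by linarith) hY2pos
    · rintro ⟨hKneg, hFmin⟩ u hu
      have h1 : F ((1 / Y) • ustar) ≤ F ((1 / Y) • u) := hFmin _ ((part1 u).1 hu)
      rw [hid ustar, hid u]
      exact mul_le_mul_of_nonneg_left h1 hY2pos.le
  refine ⟨part1, part2, part3, ?_⟩
  -- Part 4 : value identity
  intro ustar hustar Kstar hKstar hJmin hFmin
  have h1 : F Kstar ≤ F ((1 / Y) • ustar) := hFmin _ ((part1 ustar).1 hustar)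
  have h2 : F ((1 / Y) • ustar) ≤ F Kstar := ((part3 ustar hustar).1 hJmin).2 Kstar hKstar
  have h3 : F ((1 / Y) • ustar) = F Kstar := le_antisymm h2 h1
  rw [hid ustar, h3]
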